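/- Let G be a finite group and 1 → K → C → G → 1 a stem extension (K ≤ Z(C) ∩ [C,C]). Then |K| divides |M(G)|, the order of the Schur multiplier of G. In particular, if M(G) = 1 then every stem extension of G is trivial (K = 1). -/

import Mathlib

/-- The Schur multiplier of `G`, computed via the Hopf formula `(R ∩ [F,F])/[F,R]` for a
free presentation `π : F ↠ G` with kernel `R`. -/
def schurMultiplier {ι : Type*} {G : Type*} [Group G] (π : FreeGroup ι →* G) : Type _ :=
  (↥(π.ker ⊓ commutator (FreeGroup ι))) ⧸
    (Subgroup.subgroupOf ⁅(⊤ : Subgroup (FreeGroup ι)), π.ker⁆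
      (π.ker ⊓ commutator (FreeGroup ι)))

open scoped commutatorElement

/-- Commutators are unchanged by multiplying the entries by central elements. -/
theorem comm_mul_center {C : Type*} [Group C] (a b z w : C) (hz : z ∈ Subgroup.center C)
    (hw : w ∈ Subgroup.center C) : ⁅a * z, b * w⁆ = ⁅a, b⁆ := by
  have hz' := Subgroup.mem_center_iff.mp hz
  have hw' := Subgroup.mem_center_iff.mp hw
  simp only [commutatorElement_def, mul_inv_rev, mul_assoc]
  congr 1
  rw [← mul_assoc z b, ← hz' b, mul_assoc b z]
  congr 1
  rw [← mul_assoc z w, ← hz' w, mul_assoc w z, mul_inv_cancel_left,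
    ← mul_assoc w a⁻¹, ← hw' a⁻¹, mul_assoc a⁻¹ w, mul_inv_cancel_left]

instance schurMultiplier.instGroup {ι : Type*} {G : Type*} [Group G] (π : FreeGroup ι →* G) :
    Group (schurMultiplier π) := by
  unfold schurMultiplier; infer_instance

/-- Let `G` be a finite group and `1 → K → C → G → 1` a stem extension
(`K ≤ Z(C) ∩ [C,C]`). Then `|K|` divides the order of the Schur multiplier `M(G)`
(computed via the Hopf formula from any free presentation of `G`). In particular, if
`M(G)` is trivial then every stem extension of `G` is trivial. -/
theorem stmt_18 {G : Type*} [Group G] [Finite G] {ι : Type*}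
    (π : FreeGroup ι →* G) (hπ : Function.Surjective π)
    {C : Type*} [Group C] (ρ : C →* G) (hρ : Function.Surjective ρ)
    (hstem : ρ.ker ≤ Subgroup.center C ⊓ commutator C) :
    Nat.card ρ.ker ∣ Nat.card (schurMultiplier π) ∧
    (Nat.card (schurMultiplier π) = 1 → ρ.ker = ⊥) := by
  classical
  -- lift the presentation along `ρ`
  set F := FreeGroup ι
  let σ : F →* C := FreeGroup.lift fun i => Function.surjInv hρ (π (FreeGroup.of i))
  have hcomp : ∀ f : F, ρ (σ f) = π f := by
    intro f
    have : ρ.comp σ = π := by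
      apply FreeGroup.ext_hom
      intro i
      simp [σ, Function.surjInv_eq hρ]
    rw [← this]; rfl
  -- `σ` maps `π.ker` into `ρ.ker`, hence into the center of `C`
  have hker : ∀ f ∈ π.ker, σ f ∈ ρ.ker := by
    intro f hf
    simp only [MonoidHom.mem_ker] at hf ⊢
    rw [hcomp]; exact hf
  have hcent : ∀ f ∈ π.ker, σ f ∈ Subgroup.center C := fun f hf =>
    ((Subgroup.mem_inf.mp (hstem (hker f hf)))).1
  -- decomposition of any element of `C`
  have hdec : ∀ c : C, ∃ f : F, ∃ z ∈ Subgroup.center C, c = σ f * z := by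
    intro c
    obtain ⟨f, hf⟩ := hπ (ρ c)
    refine ⟨f, (σ f)⁻¹ * c, ?_, by group⟩
    have : (σ f)⁻¹ * c ∈ ρ.ker := by
      simp only [MonoidHom.mem_ker, map_mul, map_inv, hcomp, hf]
      group
    exact ((Subgroup.mem_inf.mp (hstem this))).1
  -- `[C,C] ≤ σ([F,F])`
  have hcc : commutator C ≤ (commutator F).map σ := by
    rw [commutator_def, Subgroup.commutator_le]
    intro c₁ _ c₂ _
    obtain ⟨f₁, z₁, hz₁, rfl⟩ := hdec c₁
    obtain ⟨f₂, z₂, hz₂, rfl⟩ := hdec c₂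
    rw [comm_mul_center _ _ _ _ hz₁ hz₂, ← map_commutatorElement]
    exact Subgroup.mem_map_of_mem σ
      (Subgroup.commutator_mem_commutator (Subgroup.mem_top f₁) (Subgroup.mem_top f₂))
  -- the restriction of `σ` to `R ∩ [F,F]`, landing in `K = ρ.ker`
  set N : Subgroup F := π.ker ⊓ commutator F with hN
  let ψ : N →* ρ.ker :=
    MonoidHom.codRestrict (σ.comp N.subtype) ρ.ker fun x => hker x (Subgroup.mem_inf.mp x.2).1
  -- `ψ` kills `[F,R]`
  have hFR : ⁅(⊤ : Subgroup F), π.ker⁆ ≤ σ.ker := by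
    rw [Subgroup.commutator_le]
    intro g _ r hr
    simp only [MonoidHom.mem_ker, map_commutatorElement]
    rw [commutatorElement_eq_one_iff_commute]
    exact (Subgroup.mem_center_iff.mp (hcent r hr)) (σ g)
  have hsub : (⁅(⊤ : Subgroup F), π.ker⁆.subgroupOf N) ≤ ψ.ker := by
    intro x hx
    have hx' : (x : F) ∈ ⁅(⊤ : Subgroup F), π.ker⁆ := hx
    have : σ (x : F) = 1 := hFR hx'
    exact Subtype.ext this
  -- the induced map on the Schur multiplier
  let Φ : schurMultiplier π →* ρ.ker := QuotientGroup.lift _ ψ hsub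
  have hΦsurj : Function.Surjective Φ := by
    intro k
    obtain ⟨k, hk⟩ := k
    have hkc : k ∈ commutator C := (Subgroup.mem_inf.mp (hstem hk)).2
    obtain ⟨f, hf, rfl⟩ := hcc hkc
    have hfN : f ∈ N := by
      refine Subgroup.mem_inf.mpr ⟨?_, hf⟩
      simp only [MonoidHom.mem_ker] at hk ⊢
      rw [← hcomp f]; exact hk
    exact ⟨QuotientGroup.mk (⟨f, hfN⟩ : N), rfl⟩
  constructor
  · exact Subgroup.card_dvd_of_surjective Φ hΦsurj
  · intro h
    have := Subgroup.card_dvd_of_surjective Φ hΦsurj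
    rw [h, Nat.dvd_one] at this
    exact Subgroup.eq_bot_of_card_eq _ this
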